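/- Let k be a field, V a two-dimensional k-vector space with basis {e, f}, and β ∈ k with β³ = −1. Define the linear map η : V → V ⊗ V by η(e) = β⁻¹(e ⊗ f + f ⊗ e) + f ⊗ f and η(f) = β(e ⊗ f + f ⊗ e) + e ⊗ e. Then η is cocommutative, i.e. τ ∘ η = η where τ : V ⊗ V → V ⊗ V is the twist map v ⊗ w ↦ w ⊗ v, and η is coassociative, i.e. (η ⊗ I) ∘ η = (I ⊗ η) ∘ η as maps V → V ⊗ V ⊗ V. -/

import Mathlib

open TensorProduct

/-- The twist map `τ : V ⊗ V → V ⊗ V`, `v ⊗ w ↦ w ⊗ v`. -/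
noncomputable def twist (k V : Type*) [Field k] [AddCommGroup V] [Module k V] :
    V ⊗[k] V →ₗ[k] V ⊗[k] V := (TensorProduct.comm k V V).toLinearMap

set_option maxRecDepth 8000 in
/-- Let `V` be a two-dimensional vector space over a field `k` with basis `{e, f}`
(`e = B 0`, `f = B 1`) and `β ∈ k` with `β³ = -1`.  The linear map `η : V → V ⊗ V` with
`η(e) = β⁻¹(e ⊗ f + f ⊗ e) + f ⊗ f` and `η(f) = β(e ⊗ f + f ⊗ e) + e ⊗ e` is
cocommutative (`τ ∘ η = η`) and coassociative (`(η ⊗ I) ∘ η = (I ⊗ η) ∘ η` as maps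
`V → V ⊗ V ⊗ V`, identifying `(V ⊗ V) ⊗ V ≅ V ⊗ (V ⊗ V)` by the associator). -/
theorem jordan_coalgebra_cocomm_coassoc {k V : Type*} [Field k] [AddCommGroup V] [Module k V]
    (B : Module.Basis (Fin 2) k V) (β : k) (hβ : β ^ 3 = -1)
    (η : V →ₗ[k] V ⊗[k] V)
    (he : η (B 0) = β⁻¹ • (B 0 ⊗ₜ[k] B 1 + B 1 ⊗ₜ[k] B 0) + B 1 ⊗ₜ[k] B 1)
    (hf : η (B 1) = β • (B 0 ⊗ₜ[k] B 1 + B 1 ⊗ₜ[k] B 0) + B 0 ⊗ₜ[k] B 0) :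
    twist k V ∘ₗ η = η ∧
      (TensorProduct.assoc k V V V).toLinearMap ∘ₗ
          TensorProduct.map η LinearMap.id ∘ₗ η =
        TensorProduct.map LinearMap.id η ∘ₗ η := by
  have hβ0 : β ≠ 0 := by intro h; rw [h] at hβ; norm_num at hβ
  constructor
  · apply Module.Basis.ext B
    intro i
    fin_cases i <;>
    · simp only [Fin.mk_zero, Fin.mk_one, twist, LinearMap.comp_apply, he, hf, map_add,
        map_smul, LinearEquiv.coe_coe, TensorProduct.comm_tmul]
      module
  · apply Module.Basis.ext B
    intro i
    fin_cases i <;>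
    · simp only [Fin.mk_zero, Fin.mk_one, LinearMap.comp_apply, he, hf, map_add, map_smul,
        TensorProduct.map_tmul, TensorProduct.tmul_add, TensorProduct.add_tmul,
        TensorProduct.smul_tmul, TensorProduct.tmul_smul, TensorProduct.assoc_tmul,
        LinearEquiv.coe_coe, LinearMap.id_apply]
      match_scalars <;> field_simp <;>
        first
        | linear_combination hβ
        | linear_combination -hβ
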